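/- If there exists an orthogonal array OA_λ(k,n) with k ≥ 2, n ≥ 2 and λ ≥ 1 that contains a row repeated m times, then m ≤ λn² / (k(n−1) + 1). -/
import Mathlib


/-- If an OA_λ(k,n) (k ≥ 2, n ≥ 2, λ ≥ 1) contains a row repeated m times,
then m ≤ λn² / (k(n−1) + 1). -/
theorem repeated_row_multiplicity_bound (k n lam m : ℕ) (hk : 2 ≤ k) (hn : 2 ≤ n)
    (hlam : 1 ≤ lam)
    (A : Fin (lam * n ^ 2) → Fin k → Fin n)
    (hOA : ∀ j j' : Fin k, j ≠ j' → ∀ x y : Fin n,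
      (Finset.univ.filter (fun r => A r j = x ∧ A r j' = y)).card = lam)
    (S : Finset (Fin (lam * n ^ 2))) (hScard : S.card = m)
    (hSrep : ∀ r ∈ S, ∀ r' ∈ S, A r = A r') :
    (m : ℚ) ≤ ((lam : ℚ) * n ^ 2) / ((k : ℚ) * ((n : ℚ) - 1) + 1) := by
  have hkQ : (2:ℚ) ≤ (k:ℚ) := by exact_mod_cast hk
  have hnQ : (2:ℚ) ≤ (n:ℚ) := by exact_mod_cast hn
  have hD : (0:ℚ) < (k:ℚ) * ((n:ℚ) - 1) + 1 := by nlinarith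
  have hn0 : (n:ℚ) ≠ 0 := by positivity
  rcases S.eq_empty_or_nonempty with hS | ⟨r0, hr0⟩
  · have hm : m = 0 := by rw [← hScard, hS]; rfl
    rw [hm]
    push_cast
    exact div_nonneg (by positivity) hD.le
  · set d : Fin (lam * n ^ 2) → ℕ :=
      fun r => (Finset.univ.filter fun j => A r j = A r0 j).card with hd_def
    -- column count
    have hcol : ∀ (j : Fin k) (x : Fin n),
        (Finset.univ.filter (fun r => A r j = x)).card = n * lam := by
      intro j x
      obtain ⟨j', hjj'⟩ : ∃ j' : Fin k, j ≠ j' := by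
        rcases eq_or_ne j ⟨0, by omega⟩ with h | h
        · exact ⟨⟨1, by omega⟩, by rw [h]; simp [Fin.ext_iff]⟩
        · exact ⟨⟨0, by omega⟩, h⟩
      rw [Finset.card_eq_sum_card_fiberwise (f := fun r => A r j') (t := Finset.univ)
        (fun r _ => Finset.mem_univ _)]
      have hfib : ∀ y : Fin n, ((Finset.univ.filter (fun r => A r j = x)).filter
          (fun r => A r j' = y)).card = lam := by
        intro y
        rw [Finset.filter_filter]
        exact hOA j j' hjj' x y
      simp only [hfib, Finset.sum_const, Finset.card_univ, Fintype.card_fin, smul_eq_mul]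
    -- first moment
    have sum1 : ∑ r, d r = k * (n * lam) := by
      have h1 : ∀ r, d r = ∑ j : Fin k, if A r j = A r0 j then 1 else 0 := fun r =>
        Finset.card_filter _ _
      simp_rw [h1]
      rw [Finset.sum_comm]
      have h2 : ∀ j : Fin k, (∑ r, if A r j = A r0 j then 1 else 0) = n * lam := by
        intro j
        rw [← Finset.card_filter]
        exact hcol j (A r0 j)
      simp only [h2, Finset.sum_const, Finset.card_univ, Fintype.card_fin, smul_eq_mul]
    -- second moment
    have sum2 : ∑ r, d r * d r = k * (n * lam + (k - 1) * lam) := by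
      have hd2 : ∀ r, d r * d r = ∑ j : Fin k, ∑ j' : Fin k,
          if A r j = A r0 j ∧ A r j' = A r0 j' then 1 else 0 := by
        intro r
        rw [show d r = ∑ j : Fin k, if A r j = A r0 j then 1 else 0 from
          Finset.card_filter _ _]
        rw [Finset.sum_mul_sum]
        refine Finset.sum_congr rfl fun j _ => Finset.sum_congr rfl fun j' _ => ?_
        by_cases h1 : A r j = A r0 j <;> by_cases h2 : A r j' = A r0 j' <;>
          simp [h1, h2]
      simp_rw [hd2]
      rw [Finset.sum_comm]
      have hinner : ∀ j : Fin k, (∑ r, ∑ j' : Fin k,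
          if A r j = A r0 j ∧ A r j' = A r0 j' then 1 else 0)
          = n * lam + (k - 1) * lam := by
        intro j
        rw [Finset.sum_comm]
        have hterm : ∀ j' : Fin k, (∑ r,
            if A r j = A r0 j ∧ A r j' = A r0 j' then 1 else 0)
            = (Finset.univ.filter (fun r => A r j = A r0 j ∧ A r j' = A r0 j')).card :=
          fun j' => (Finset.card_filter _ _).symm
        simp_rw [hterm]
        rw [← Finset.add_sum_erase _ _ (Finset.mem_univ j)]
        congr 1
        · have : (Finset.univ.filter (fun r => A r j = A r0 j ∧ A r j = A r0 j)).card
              = (Finset.univ.filter (fun r => A r j = A r0 j)).card := by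
            simp only [and_self]
          rw [this]
          exact hcol j (A r0 j)
        · rw [Finset.sum_congr rfl fun j' hj' =>
            hOA j j' ((Finset.mem_erase.mp hj').1.symm) (A r0 j) (A r0 j')]
          rw [Finset.sum_const, Finset.card_erase_of_mem (Finset.mem_univ j),
            Finset.card_univ, Fintype.card_fin, smul_eq_mul]
      simp only [hinner, Finset.sum_const, Finset.card_univ, Fintype.card_fin, smul_eq_mul]
    -- rows of S have d = k
    have hdS : ∀ r ∈ S, d r = k := by
      intro r hr
      have hA : A r = A r0 := hSrep r hr r0 hr0
      simp [hd_def, hA]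
    -- cast to ℚ
    have hcast1 : (∑ r, ((d r : ℚ))) = (k:ℚ) * ((n:ℚ) * lam) := by
      exact_mod_cast congrArg (Nat.cast (R := ℚ)) sum1
    have hcast2 : (∑ r, ((d r : ℚ))^2) = (k:ℚ) * ((n:ℚ) * lam + ((k:ℚ) - 1) * lam) := by
      have h2 : (∑ r, ((d r : ℚ))^2) = ((∑ r, d r * d r : ℕ) : ℚ) := by
        push_cast
        exact Finset.sum_congr rfl fun r _ => by ring
      rw [h2, sum2]
      push_cast [Nat.cast_sub (show 1 ≤ k by omega)]
      ring
    set c : ℚ := ((k:ℚ) - 1) / n with hc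
    -- total sum of (d r - c)^2
    have hQ : (∑ r, ((d r : ℚ) - c)^2) = (lam:ℚ) * ((k:ℚ) * ((n:ℚ) - 1) + 1) := by
      have expand : ∀ r, ((d r : ℚ) - c)^2 = (d r : ℚ)^2 - (2*c)*(d r : ℚ) + c^2 :=
        fun r => by ring
      simp_rw [expand]
      rw [Finset.sum_add_distrib, Finset.sum_sub_distrib, ← Finset.mul_sum, hcast1, hcast2,
        Finset.sum_const, Finset.card_univ, Fintype.card_fin, nsmul_eq_mul]
      rw [hc]
      push_cast
      field_simp
      ring
    -- lower bound via S
    have key : (m:ℚ) * ((k:ℚ) - c)^2 ≤ ∑ r, ((d r : ℚ) - c)^2 := by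
      have h1 : (∑ r ∈ S, ((d r : ℚ) - c)^2) = (m:ℚ) * ((k:ℚ) - c)^2 := by
        rw [Finset.sum_congr rfl fun r hr => by rw [hdS r hr]]
        rw [Finset.sum_const, hScard, nsmul_eq_mul]
      rw [← h1]
      exact Finset.sum_le_sum_of_subset_of_nonneg (Finset.subset_univ S)
        (fun r _ _ => sq_nonneg _)
    rw [hQ] at key
    have hkc : (k:ℚ) - c = ((k:ℚ) * ((n:ℚ) - 1) + 1) / n := by
      rw [hc]; field_simp; ring
    rw [hkc, div_pow, ← mul_div_assoc,
      div_le_iff₀ (by positivity : (0:ℚ) < (n:ℚ)^2)] at key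
    -- key : m * (k*(n-1)+1)^2 ≤ lam * (k*(n-1)+1) * n^2
    rw [le_div_iff₀ hD]
    have key4 : ((k:ℚ) * ((n:ℚ) - 1) + 1) * ((m:ℚ) * ((k:ℚ) * ((n:ℚ) - 1) + 1))
        ≤ ((k:ℚ) * ((n:ℚ) - 1) + 1) * ((lam:ℚ) * (n:ℚ)^2) := by nlinarith [key]
    exact le_of_mul_le_mul_left key4 hD
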